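/- For every nonnegative integer n, every nonnegative integer r, and every real x, one has (x + r)^n = ∑_{k=0}^{n} T_r(n+r, k+r) · x^{[k]}. -/
import Mathlib


/-- The extended `r`-central factorial numbers of the second kind:
`T_r(n+r,k+r) = (1/k!) ∑_{j=0}^{k} (-1)^{k-j} C(k,j) (j + r - k/2)^n`. -/
noncomputable def rcentralT (r n k : ℕ) : ℝ :=
  (1 / (Nat.factorial k : ℝ)) * ∑ j ∈ Finset.range (k + 1),
    (-1 : ℝ) ^ (k - j) * (Nat.choose k j : ℝ) * ((j : ℝ) + (r : ℝ) - (k : ℝ) / 2) ^ n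

/-- The central factorials: `x^{[0]} = 1` and
`x^{[n]} = x ∏_{i=1}^{n-1} (x + n/2 - i)` for `n ≥ 1`. -/
noncomputable def centralFactorial (x : ℝ) : ℕ → ℝ
  | 0 => 1
  | n + 1 => x * ∏ i ∈ Finset.range n, (x + ((n : ℝ) + 1) / 2 - ((i : ℝ) + 1))

namespace CFAux

open Polynomial Finset

/-- The central factorial polynomials. -/
noncomputable def CF : ℕ → ℝ[X]
  | 0 => 1
  | n + 1 => X * ∏ i ∈ Finset.range n, (X + C (((n : ℝ) + 1) / 2 - ((i : ℝ) + 1)))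

lemma CF_eval (x : ℝ) : ∀ k, (CF k).eval x = centralFactorial x k
  | 0 => by simp [CF, centralFactorial]
  | n + 1 => by
    simp only [CF, centralFactorial, eval_mul, eval_X, eval_prod, eval_add, eval_C]
    congr 1
    refine Finset.prod_congr rfl fun i _ => by ring

lemma CF_monic : ∀ k, (CF k).Monic
  | 0 => monic_one
  | n + 1 => monic_X.mul (monic_prod_of_monic _ _ fun i _ => monic_X_add_C _)

lemma CF_natDegree : ∀ k, (CF k).natDegree = k
  | 0 => natDegree_one
  | n + 1 => by
    have h1 : (∏ i ∈ Finset.range n,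
        (X + C (((n : ℝ) + 1) / 2 - ((i : ℝ) + 1)))).natDegree = n := by
      rw [natDegree_prod_of_monic _ _ fun i _ => monic_X_add_C _]
      rw [Finset.sum_congr rfl fun i _ => natDegree_X_add_C _]
      simp
    rw [show CF (n+1) = X * ∏ i ∈ Finset.range n,
        (X + C (((n : ℝ) + 1) / 2 - ((i : ℝ) + 1))) from rfl,
      (monic_X (R := ℝ)).natDegree_mul (monic_prod_of_monic _ _ fun i _ => monic_X_add_C _),
      natDegree_X, h1]
    omega

lemma CF_eval_zero (k : ℕ) : (CF (k + 1)).eval 0 = 0 := by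
  simp [CF]

/-- The central difference operator. -/
noncomputable def D : Module.End ℝ ℝ[X] :=
  (taylor (2⁻¹ : ℝ) : ℝ[X] →ₗ[ℝ] ℝ[X]) - (taylor (-2⁻¹ : ℝ) : ℝ[X] →ₗ[ℝ] ℝ[X])

lemma D_apply (p : ℝ[X]) : D p = taylor (2⁻¹ : ℝ) p - taylor (-2⁻¹ : ℝ) p := rfl

lemma D_eval (p : ℝ[X]) (x : ℝ) :
    (D p).eval x = p.eval (x + 2⁻¹) - p.eval (x - 2⁻¹) := by
  rw [D_apply, eval_sub, taylor_eval, taylor_eval, sub_eq_add_neg x]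

lemma taylor_pow_apply (a : ℝ) (m : ℕ) (p : ℝ[X]) :
    (((taylor a : ℝ[X] →ₗ[ℝ] ℝ[X]) : Module.End ℝ ℝ[X]) ^ m) p = taylor ((m : ℝ) * a) p := by
  induction m with
  | zero => simp
  | succ m ih =>
    rw [pow_succ', Module.End.mul_apply, ih, taylor_taylor]
    congr 1
    push_cast
    ring

lemma taylor_comm (a b : ℝ) :
    Commute ((taylor a : ℝ[X] →ₗ[ℝ] ℝ[X]) : Module.End ℝ ℝ[X]) (taylor b : ℝ[X] →ₗ[ℝ] ℝ[X]) := by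
  show _ * _ = _ * _
  apply LinearMap.ext
  intro p
  simp [Module.End.mul_apply, taylor_taylor, add_comm]

lemma neg_pow_apply (f : Module.End ℝ ℝ[X]) (m : ℕ) (p : ℝ[X]) :
    ((-f) ^ m) p = (-1 : ℝ) ^ m • ((f ^ m) p) := by
  induction m with
  | zero => simp
  | succ m ih =>
    rw [pow_succ', Module.End.mul_apply, ih, LinearMap.neg_apply, map_smul,
      pow_succ' (-1 : ℝ), pow_succ' f, Module.End.mul_apply, mul_smul, neg_one_smul]

lemma Dpow_eval_zero (k : ℕ) (p : ℝ[X]) :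
    ((D ^ k) p).eval 0
      = ∑ j ∈ Finset.range (k + 1),
          (-1 : ℝ) ^ (k - j) * (k.choose j : ℝ) * p.eval ((j : ℝ) - (k : ℝ) / 2) := by
  have hD : D = ((taylor (2⁻¹ : ℝ) : ℝ[X] →ₗ[ℝ] ℝ[X]) : Module.End ℝ ℝ[X])
      + (-(taylor (-2⁻¹ : ℝ) : ℝ[X] →ₗ[ℝ] ℝ[X])) := sub_eq_add_neg _ _
  have hc : Commute ((taylor (2⁻¹ : ℝ) : ℝ[X] →ₗ[ℝ] ℝ[X]) : Module.End ℝ ℝ[X])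
      (-(taylor (-2⁻¹ : ℝ) : ℝ[X] →ₗ[ℝ] ℝ[X])) := (taylor_comm _ _).neg_right
  rw [hD, hc.add_pow, LinearMap.sum_apply, eval_finset_sum]
  refine Finset.sum_congr rfl fun j hj => ?_
  have hjk : j ≤ k := Nat.lt_succ_iff.mp (Finset.mem_range.mp hj)
  rw [Module.End.mul_apply, Module.End.mul_apply, Module.End.natCast_apply,
    map_nsmul, map_nsmul, neg_pow_apply, map_smul, taylor_pow_apply, taylor_pow_apply,
    taylor_taylor]
  rw [eval_smul, eval_smul, taylor_eval]
  have harg : (0 : ℝ) + ((j : ℝ) * 2⁻¹ + (↑(k - j) : ℝ) * -2⁻¹) = (j : ℝ) - (k : ℝ) / 2 := by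
    rw [Nat.cast_sub hjk]
    ring
  rw [harg, smul_eq_mul, nsmul_eq_mul]
  ring

lemma taylor_ne_zero {p : ℝ[X]} (hp : p ≠ 0) (a : ℝ) : taylor a p ≠ 0 := by
  intro h
  apply hp
  have := congrArg (taylor (-a)) h
  rwa [taylor_taylor, neg_add_cancel, taylor_zero, map_zero] at this

lemma D_degree_le {p : ℝ[X]} {m : ℕ} (h : p.degree ≤ (m + 1 : ℕ)) :
    (D p).degree ≤ (m : ℕ) := by
  rcases eq_or_ne p 0 with rfl | hp
  · simp [D_apply]
  have h1 : (taylor (2⁻¹ : ℝ) p).degree = (taylor (-2⁻¹ : ℝ) p).degree := by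
    rw [degree_eq_natDegree (taylor_ne_zero hp _), degree_eq_natDegree (taylor_ne_zero hp _),
      natDegree_taylor, natDegree_taylor]
  have hlc : ∀ a : ℝ, (taylor a p).leadingCoeff = p.leadingCoeff := by
    intro a
    rw [taylor_apply, leadingCoeff_comp (by simp [natDegree_X_add_C])]
    simp [leadingCoeff_X_add_C]
  have hlt : (D p).degree < (taylor (2⁻¹ : ℝ) p).degree := by
    rw [D_apply]
    exact degree_sub_lt h1 (taylor_ne_zero hp _) (by rw [hlc, hlc])
  have hdeg : (taylor (2⁻¹ : ℝ) p).degree ≤ (m + 1 : ℕ) := by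
    rw [degree_eq_natDegree (taylor_ne_zero hp _), natDegree_taylor]
    rw [degree_eq_natDegree hp] at h
    exact_mod_cast h
  have hlt2 : (D p).degree < ((m + 1 : ℕ) : WithBot ℕ) := lt_of_lt_of_le hlt hdeg
  rcases eq_or_ne (D p) 0 with h0 | h0
  · simp [h0]
  rw [degree_eq_natDegree h0] at hlt2 ⊢
  have : (D p).natDegree < m + 1 := by exact_mod_cast hlt2
  exact_mod_cast Nat.lt_succ_iff.mp this

lemma D_const {p : ℝ[X]} (h : p.degree ≤ 0) : D p = 0 := by
  rw [eq_C_of_degree_le_zero h, D_apply, taylor_C, taylor_C, sub_self]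

lemma Dpow_eq_zero {n : ℕ} {p : ℝ[X]} (h : p.degree ≤ (n : ℕ)) : (D ^ (n + 1)) p = 0 := by
  induction n generalizing p with
  | zero => rw [pow_one]; exact D_const (by exact_mod_cast h)
  | succ n ih =>
    rw [pow_succ, Module.End.mul_apply]
    exact ih (D_degree_le h)

lemma cf_diff (k : ℕ) (x : ℝ) :
    centralFactorial (x + 2⁻¹) (k + 1) - centralFactorial (x - 2⁻¹) (k + 1)
      = ((k : ℝ) + 1) * centralFactorial x k := by
  cases k with
  | zero => simp [centralFactorial]; ring
  | succ m =>
    have e1 : centralFactorial (x + 2⁻¹) (m + 1 + 1)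
        = (x + 2⁻¹) * ((∏ i ∈ Finset.range m, (x + ((m : ℝ) + 1) / 2 - ((i : ℝ) + 1)))
            * (x + ((m : ℝ) + 1) / 2)) := by
      show (x + 2⁻¹) * ∏ i ∈ Finset.range (m + 1),
          (x + 2⁻¹ + (((m + 1 : ℕ) : ℝ) + 1) / 2 - ((i : ℝ) + 1)) = _
      rw [Finset.prod_range_succ']
      congr 2
      · refine Finset.prod_congr rfl fun i _ => ?_
        push_cast
        ring
      · push_cast
        ring
    have e2 : centralFactorial (x - 2⁻¹) (m + 1 + 1)
        = (x - 2⁻¹) * ((∏ i ∈ Finset.range m, (x + ((m : ℝ) + 1) / 2 - ((i : ℝ) + 1)))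
            * (x - ((m : ℝ) + 1) / 2)) := by
      show (x - 2⁻¹) * ∏ i ∈ Finset.range (m + 1),
          (x - 2⁻¹ + (((m + 1 : ℕ) : ℝ) + 1) / 2 - ((i : ℝ) + 1)) = _
      rw [Finset.prod_range_succ]
      congr 2
      · refine Finset.prod_congr rfl fun i _ => ?_
        push_cast
        ring
      · push_cast
        ring
    have e3 : centralFactorial x (m + 1)
        = x * ∏ i ∈ Finset.range m, (x + ((m : ℝ) + 1) / 2 - ((i : ℝ) + 1)) := rfl
    rw [e1, e2, e3]
    push_cast
    ring

lemma D_CF (k : ℕ) : D (CF (k + 1)) = ((k : ℝ) + 1) • CF k := by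
  apply Polynomial.funext
  intro x
  rw [D_eval, eval_smul, CF_eval, CF_eval, CF_eval, smul_eq_mul]
  exact cf_diff k x

lemma Dpow_CF (k : ℕ) : ∀ j ≤ k, (D ^ j) (CF k) = ((k.descFactorial j : ℕ) : ℝ) • CF (k - j) := by
  intro j
  induction j with
  | zero => intro _; simp
  | succ j ih =>
    intro hj
    have hj' : j ≤ k := Nat.le_of_succ_le hj
    rw [pow_succ', Module.End.mul_apply, ih hj', map_smul]
    have hk : k - j = (k - (j + 1)) + 1 := by omega
    rw [hk, D_CF, Nat.descFactorial_succ]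
    rw [smul_smul]
    congr 1
    have : ((k - (j + 1) : ℕ) : ℝ) + 1 = ((k - j : ℕ) : ℝ) := by
      have : (k - (j + 1)) + 1 = k - j := by omega
      exact_mod_cast congrArg (Nat.cast (R := ℝ)) this
    rw [this]
    push_cast
    ring

lemma newton (n : ℕ) : ∀ p : ℝ[X], p.degree ≤ (n : ℕ) → ∀ x : ℝ,
    p.eval x = ∑ k ∈ Finset.range (n + 1),
      ((D ^ k) p).eval 0 / (k.factorial : ℝ) * (CF k).eval x := by
  induction n with
  | zero =>
    intro p hp x
    rw [eq_C_of_degree_le_zero hp]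
    simp [CF]
  | succ n ih =>
    intro p hp x
    set c := p.coeff (n + 1) with hc
    have hCF1 : (CF (n + 1)).coeff (n + 1) = 1 := by
      have := (CF_monic (n + 1))
      rw [Monic, leadingCoeff, CF_natDegree] at this
      exact this
    have hCFdeg : (CF (n + 1)).degree ≤ ((n + 1 : ℕ) : WithBot ℕ) := by
      have h := degree_le_natDegree (p := CF (n + 1))
      rwa [CF_natDegree] at h
    set q := p - c • CF (n + 1) with hq
    have hqdeg : q.degree ≤ (n : ℕ) := by
      refine (degree_le_iff_coeff_zero _ _).mpr fun m hm => ?_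
      have hm' : n + 1 ≤ m := by exact_mod_cast Nat.lt_iff_add_one_le.mp (by exact_mod_cast hm)
      rw [hq, coeff_sub, coeff_smul]
      rcases eq_or_lt_of_le hm' with h | h
      · rw [← h, hCF1, smul_eq_mul, mul_one, hc, sub_self]
      · rw [coeff_eq_zero_of_degree_lt (lt_of_le_of_lt hp (by exact_mod_cast h)),
          coeff_eq_zero_of_degree_lt (lt_of_le_of_lt hCFdeg (by exact_mod_cast h))]
        simp
    have hpsplit : p = q + c • CF (n + 1) := by rw [hq]; ring
    rw [hpsplit]
    have hsplit : ∀ k : ℕ, ((D ^ k) (q + c • CF (n + 1))).eval 0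
        = ((D ^ k) q).eval 0 + c * ((D ^ k) (CF (n + 1))).eval 0 := by
      intro k
      rw [map_add, map_smul, eval_add, eval_smul, smul_eq_mul]
    have expand : ∀ k : ℕ, ((D ^ k) (q + c • CF (n + 1))).eval 0 / (k.factorial : ℝ) * (CF k).eval x
        = ((D ^ k) q).eval 0 / (k.factorial : ℝ) * (CF k).eval x
          + c * (((D ^ k) (CF (n + 1))).eval 0 / (k.factorial : ℝ) * (CF k).eval x) := by
      intro k
      rw [hsplit k]
      ring
    rw [Finset.sum_congr rfl fun k _ => expand k, Finset.sum_add_distrib]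
    have hA : ∑ k ∈ Finset.range (n + 1 + 1),
        ((D ^ k) q).eval 0 / (k.factorial : ℝ) * (CF k).eval x = q.eval x := by
      rw [Finset.sum_range_succ, Dpow_eq_zero hqdeg]
      rw [← ih q hqdeg x]
      simp
    have hB : ∑ k ∈ Finset.range (n + 1 + 1),
        c * (((D ^ k) (CF (n + 1))).eval 0 / (k.factorial : ℝ) * (CF k).eval x)
          = c * (CF (n + 1)).eval x := by
      rw [Finset.sum_range_succ]
      have hzero : ∀ k ∈ Finset.range (n + 1),
          c * (((D ^ k) (CF (n + 1))).eval 0 / (k.factorial : ℝ) * (CF k).eval x) = 0 := by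
        intro k hk
        have hk' : k ≤ n := Nat.lt_succ_iff.mp (Finset.mem_range.mp hk)
        rw [Dpow_CF (n + 1) k (by omega)]
        have : n + 1 - k = (n - k) + 1 := by omega
        rw [this, eval_smul, CF_eval_zero]
        simp
      rw [Finset.sum_eq_zero hzero, zero_add]
      rw [Dpow_CF (n + 1) (n + 1) le_rfl, Nat.sub_self, Nat.descFactorial_self]
      have h1 : (CF 0).eval 0 = 1 := by simp [CF]
      rw [eval_smul, h1, smul_eq_mul, mul_one]
      rw [div_self (by exact_mod_cast (Nat.factorial_pos (n + 1)).ne')]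
      ring
    rw [hA, hB, eval_add, eval_smul, smul_eq_mul]

end CFAux

open Polynomial in
/-- For every nonnegative integer `n`, nonnegative integer `r` and real `x`:
`(x + r)^n = ∑_{k=0}^{n} T_r(n+r, k+r) x^{[k]}`. -/
theorem pow_eq_sum_rcentralT_centralFactorial (n r : ℕ) (x : ℝ) :
    (x + (r : ℝ)) ^ n =
      ∑ k ∈ Finset.range (n + 1), rcentralT r n k * centralFactorial x k := by
  classical
  have hdeg : ((X + C (r : ℝ)) ^ n : ℝ[X]).degree ≤ (n : ℕ) := by
    have h1 : ((X + C (r : ℝ)) ^ n : ℝ[X]).natDegree = n := by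
      rw [natDegree_pow, natDegree_X_add_C, mul_one]
    calc ((X + C (r : ℝ)) ^ n : ℝ[X]).degree
        ≤ (((X + C (r : ℝ)) ^ n : ℝ[X]).natDegree : WithBot ℕ) := degree_le_natDegree
      _ = (n : WithBot ℕ) := by rw [h1]
  have hx : (x + (r : ℝ)) ^ n = ((X + C (r : ℝ)) ^ n : ℝ[X]).eval x := by
    simp
  rw [hx, CFAux.newton n _ hdeg x]
  refine Finset.sum_congr rfl fun k hk => ?_
  rw [CFAux.Dpow_eval_zero, CFAux.CF_eval, rcentralT]
  rw [div_eq_mul_inv, mul_comm (_ : ℝ) ((Nat.factorial k : ℝ)⁻¹), one_div]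
  congr 2
  refine Finset.sum_congr rfl fun j hj => ?_
  congr 1
  rw [eval_pow, eval_add, eval_X, eval_C]
  congr 1
  ring
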